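/- Define an involution φ on Dyck paths of size n as follows: call a peak bad if its y-coordinate is even and a valley bad if its x-coordinate is odd; if P has no bad corner set φ(P)=P, otherwise swap the two steps of the first (leftmost) bad corner of P. Then φ is an involution on the set of Dyck paths of size n, and its fixed-point set is exactly the set of Dyck paths with no peak of even y-coordinate and no valley of odd x-coordinate. -/

import Mathlib

/-- A Dyck path of size `n`: a list of booleans (`true` = north step, `false` = east step)
from `(0,0)` to `(n,n)` staying weakly above the diagonal `y = x`. -/
def IsDyckPath (n : ℕ) (w : List Bool) : Prop :=
  w.length = 2 * n ∧ w.count true = n ∧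
    ∀ k, (w.take k).count false ≤ (w.take k).count true

/-- The `y`-coordinate of the lattice point reached after `k` steps. -/
def ycoord (w : List Bool) (k : ℕ) : ℕ := (w.take k).count true

/-- The `x`-coordinate of the lattice point reached after `k` steps. -/
def xcoord (w : List Bool) (k : ℕ) : ℕ := (w.take k).count false

/-- A peak: a north step at position `i` followed by an east step. -/
def IsPeak (w : List Bool) (i : ℕ) : Prop := w[i]? = some true ∧ w[i+1]? = some false

/-- A valley: an east step at position `i` followed by a north step. -/
def IsValley (w : List Bool) (i : ℕ) : Prop := w[i]? = some false ∧ w[i+1]? = some true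

/-- Height above the diagonal after `k` steps. -/
def pdepth (w : List Bool) (k : ℕ) : ℤ := (ycoord w k : ℤ) - (xcoord w k : ℤ)

/-- Step `i` (a north step) of `w` is matched with step `j` (an east step):
the facing east step at the same height (balanced-parentheses matching). -/
def Matches (w : List Bool) (i j : ℕ) : Prop :=
  i < j ∧ w[i]? = some true ∧ w[j]? = some false ∧
    pdepth w (j + 1) = pdepth w i ∧ ∀ k, i < k → k ≤ j → pdepth w i < pdepth w k

/-- The graph on `m` points whose edges are the upper arches and the lower arches;
its connected components are the components of the corresponding meander. -/
def meanderGraph (m : ℕ) (upper lower : ℕ → ℕ → Prop) : SimpleGraph (Fin m) where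
  Adj i j := i ≠ j ∧ (upper i.1 j.1 ∨ upper j.1 i.1 ∨ lower i.1 j.1 ∨ lower j.1 i.1)
  symm := by
    constructor
    intro i j h
    exact ⟨h.1.symm, by tauto⟩
  loopless := by
    constructor
    intro i h
    exact h.1 rfl

/-- The number of components of the meander with the matching of `P` above and the
matching of `Q` below. -/
noncomputable def trajPQ (n : ℕ) (P Q : List Bool) : ℕ :=
  Nat.card (meanderGraph (2 * n) (Matches P) (Matches Q)).ConnectedComponent

/-- The number of components of the meander with the matching of `P` above and the
rainbow matching `i ↦ 2n - 1 - i` below. -/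
noncomputable def traj (n : ℕ) (P : List Bool) : ℕ :=
  Nat.card (meanderGraph (2 * n) (Matches P)
    (fun i j => i + j + 1 = 2 * n)).ConnectedComponent

/-- No peak with even `y`-coordinate and no valley with odd `x`-coordinate. -/
def NoBadCorner (w : List Bool) : Prop :=
  (∀ i, IsPeak w i → Odd (ycoord w (i + 1))) ∧
  (∀ i, IsValley w i → Even (xcoord w (i + 1)))

/-- A bad corner: a peak with even `y`-coordinate or a valley with odd `x`-coordinate. -/
def IsBadCorner (w : List Bool) (i : ℕ) : Prop :=
  (IsPeak w i ∧ Even (ycoord w (i + 1))) ∨ (IsValley w i ∧ Odd (xcoord w (i + 1)))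

/-- Interchange the two steps of the corner at positions `i`, `i+1`. -/
def swapCorner (w : List Bool) (i : ℕ) : List Bool :=
  (w.set i (w.getD (i + 1) true)).set (i + 1) (w.getD i true)

open Classical in
/-- The involution `φ`: swap the two steps of the first bad corner, if any. -/
noncomputable def phiMap (w : List Bool) : List Bool :=
  if h : ∃ i, IsBadCorner w i then swapCorner w (Nat.find h) else w

/-- The number of unit squares between a Dyck path and the diagonal `y = x`. -/
def area (w : List Bool) : ℕ :=
  ((List.range w.length).map fun i =>
    if w.getD i true then 0 else ycoord w i - xcoord w i - 1).sum

/-- The zigzag Dyck path `(NE)^m`. -/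
def zigzag (m : ℕ) : List Bool := (List.replicate m [true, false]).flatten

/-- `N^{2a_1} E^{2b_1} ⋯ N^{2a_t} E^{2b_t}` for `ab = [(a_1,b_1),…,(a_t,b_t)]`. -/
def doubledWord (ab : List (ℕ × ℕ)) : List Bool :=
  (ab.map fun p => List.replicate (2 * p.1) true ++ List.replicate (2 * p.2) false).flatten

/-- `N^{a_1} E^{b_1} ⋯ N^{a_t} E^{b_t}` for `ab = [(a_1,b_1),…,(a_t,b_t)]`. -/
def halfWord (ab : List (ℕ × ℕ)) : List Bool :=
  (ab.map fun p => List.replicate p.1 true ++ List.replicate p.2 false).flatten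

/-- All peaks at odd height (`height` = `y - x` at the peak's lattice point). -/
def AllPeaksOdd (w : List Bool) : Prop :=
  ∀ i, IsPeak w i → Odd (ycoord w (i + 1) - xcoord w (i + 1))

/-- All peaks at even height. -/
def AllPeaksEven (w : List Bool) : Prop :=
  ∀ i, IsPeak w i → Even (ycoord w (i + 1) - xcoord w (i + 1))

/-- Steps of a Motzkin path: up, horizontal, down. -/
inductive MStep | U | H | D
deriving DecidableEq

/-- The total height change along a list of Motzkin steps. -/
def msum (l : List MStep) : ℤ :=
  (l.map fun s => match s with | MStep.U => 1 | MStep.H => 0 | MStep.D => -1).sum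

/-- A Motzkin path of length `n`. -/
def IsMotzkin (n : ℕ) (l : List MStep) : Prop :=
  l.length = n ∧ msum l = 0 ∧ ∀ k, 0 ≤ msum (l.take k)

/-- A Riordan path of length `n`: a Motzkin path with no horizontal step on the `x`-axis. -/
def IsRiordan (n : ℕ) (l : List MStep) : Prop :=
  IsMotzkin n l ∧ ∀ i, l[i]? = some MStep.H → msum (l.take i) ≠ 0

/-- The map `φ_A` from Dyck paths of size `n+1` (all peaks at odd height)
to Motzkin paths of length `n`: `v_j` is read off from steps `p_{2j} p_{2j+1}`. -/
def phiA (n : ℕ) (P : List Bool) : List MStep :=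
  (List.range n).map fun j =>
    match P.getD (2 * j + 1) true, P.getD (2 * j + 2) true with
    | true, true => MStep.U
    | false, true => MStep.H
    | _, _ => MStep.D

/-- The map `φ_B` from Dyck paths of size `n` (all peaks at even height)
to Riordan paths of length `n`: `u_j` is read off from steps `p_{2j-1} p_{2j}`. -/
def phiB (n : ℕ) (P : List Bool) : List MStep :=
  (List.range n).map fun j =>
    match P.getD (2 * j) true, P.getD (2 * j + 1) true with
    | true, true => MStep.U
    | false, true => MStep.H
    | _, _ => MStep.D
lemma count_take_succ (w : List Bool) (c d : Bool) (k : ℕ) (hk : w[k]? = some d) :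
    (w.take (k+1)).count c = (w.take k).count c + if d = c then 1 else 0 := by
  rw [List.take_succ, hk, List.count_append]
  simp [List.count_cons]

lemma count_take_between (w : List Bool) (c : Bool) (j k : ℕ) (hjk : j ≤ k)
    (h : ∀ m, j ≤ m → m < k → w[m]? ≠ some c) :
    (w.take k).count c = (w.take j).count c := by
  induction k, hjk using Nat.le_induction with
  | base => rfl
  | succ k hk ih =>
    have ih' := ih (fun m hm hm2 => h m hm (by omega))
    rcases hwk : w[k]? with _ | d
    · rw [List.take_succ, hwk]; simpa using ih'
    · rw [count_take_succ w c d k hwk]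
      have hd : d ≠ c := by intro e; exact h k hk (by omega) (e ▸ hwk)
      simp [hd, ih']

lemma exists_index_of_count_pos (w : List Bool) (i : ℕ) (c : Bool)
    (h : 0 < (w.take i).count c) : ∃ m, m < i ∧ w[m]? = some c := by
  have hc : c ∈ w.take i := List.count_pos_iff.mp h
  obtain ⟨m, hm, he⟩ := List.mem_iff_getElem.mp hc
  have hml : m < w.length := by
    have := hm; rw [List.length_take] at this; omega
  have hmi : m < i := by
    have := hm; rw [List.length_take] at this; omega
  refine ⟨m, hmi, ?_⟩
  rw [List.getElem?_eq_getElem hml]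
  rw [List.getElem_take] at he
  exact congrArg some he

lemma first_bad_peak_even_x (w : List Bool) (i : ℕ)
    (hfirst : ∀ j, j < i → ¬ IsBadCorner w j)
    (hp : IsPeak w i) : Even (xcoord w (i+1)) := by
  classical
  have hxi : xcoord w (i+1) = xcoord w i := by
    unfold xcoord; rw [count_take_succ w false true i hp.1]; simp
  rcases Nat.eq_zero_or_pos (xcoord w i) with h0 | hpos
  · rw [hxi, h0]; exact Even.zero
  · obtain ⟨m, hmi, hm⟩ := exists_index_of_count_pos w i false hpos
    set P : ℕ → Prop := fun j => w[j]? = some false with hP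
    set j := Nat.findGreatest P (i-1) with hj
    have hPj : P j := Nat.findGreatest_spec (m := m) (by omega) hm
    have hji : j < i := lt_of_le_of_lt (Nat.findGreatest_le _) (by omega)
    have hgt : ∀ k, j < k → k < i → w[k]? = some true := by
      intro k hk1 hk2
      have hnP : ¬ P k := Nat.findGreatest_is_greatest hk1 (by omega)
      have hkl : k < w.length := by
        have : i < w.length := (List.getElem?_eq_some_iff.mp hp.1).1
        omega
      rcases hb : w[k]? with _|c
      · rw [List.getElem?_eq_getElem hkl] at hb; exact absurd hb (by simp)
      · cases c
        · exact absurd hb hnP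
        · rfl
    have hj1 : w[j+1]? = some true := by
      rcases eq_or_lt_of_le (show j+1 ≤ i by omega) with he | hlt
      · rw [he]; exact hp.1
      · exact hgt (j+1) (by omega) hlt
    have hval : IsValley w j := ⟨hPj, hj1⟩
    have hcc : xcoord w i = xcoord w (j+1) :=
      count_take_between w false (j+1) i (by omega) (fun m h1 h2 he => by
        have := hgt m h1 h2; rw [this] at he; simp at he)
    have hnb := hfirst j hji
    rw [IsBadCorner] at hnb
    push_neg at hnb
    rw [hxi, hcc]
    exact Nat.not_odd_iff_even.mp (hnb.2 hval)

lemma first_bad_valley_odd_y (n : ℕ) (w : List Bool) (hw : IsDyckPath n w) (i : ℕ)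
    (hfirst : ∀ j, j < i → ¬ IsBadCorner w j)
    (hv : IsValley w i) (hx : Odd (xcoord w (i+1))) : Odd (ycoord w (i+1)) := by
  classical
  have hyi : ycoord w (i+1) = ycoord w i := by
    unfold ycoord; rw [count_take_succ w true false i hv.1]; simp
  have hpos : 0 < ycoord w i := by
    rcases Nat.eq_zero_or_pos (ycoord w i) with h0 | h
    · exfalso
      have hd := hw.2.2 (i+1)
      have hd2 : ycoord w (i+1) = 0 := by rw [hyi, h0]
      have : xcoord w (i+1) = 0 := by
        have : xcoord w (i+1) ≤ ycoord w (i+1) := hd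
        omega
      rw [this] at hx
      simp [Nat.odd_iff] at hx
    · exact h
  obtain ⟨m, hmi, hm⟩ := exists_index_of_count_pos w i true hpos
  set P : ℕ → Prop := fun j => w[j]? = some true with hP
  set j := Nat.findGreatest P (i-1) with hj
  have hPj : P j := Nat.findGreatest_spec (m := m) (by omega) hm
  have hji : j < i := lt_of_le_of_lt (Nat.findGreatest_le _) (by omega)
  have hgt : ∀ k, j < k → k < i → w[k]? = some false := by
    intro k hk1 hk2
    have hnP : ¬ P k := Nat.findGreatest_is_greatest hk1 (by omega)
    have hkl : k < w.length := by
      have : i < w.length := (List.getElem?_eq_some_iff.mp hv.1).1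
      omega
    rcases hb : w[k]? with _|c
    · rw [List.getElem?_eq_getElem hkl] at hb; exact absurd hb (by simp)
    · cases c
      · rfl
      · exact absurd hb hnP
  have hj1 : w[j+1]? = some false := by
    rcases eq_or_lt_of_le (show j+1 ≤ i by omega) with he | hlt
    · rw [he]; exact hv.1
    · exact hgt (j+1) (by omega) hlt
  have hpk : IsPeak w j := ⟨hPj, hj1⟩
  have hcc : ycoord w i = ycoord w (j+1) :=
    count_take_between w true (j+1) i (by omega) (fun m h1 h2 he => by
      have := hgt m h1 h2; rw [this] at he; simp at he)
  have hnb := hfirst j hji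
  rw [IsBadCorner] at hnb
  push_neg at hnb
  rw [hyi, hcc]
  exact Nat.not_even_iff_odd.mp (hnb.1 hpk)
lemma swapCorner_eq (i : ℕ) : ∀ (w : List Bool) (a b : Bool), w[i]? = some a → w[i+1]? = some b →
    swapCorner w i = w.take i ++ b :: a :: w.drop (i+2) := by
  induction i with
  | zero =>
    rintro (_|⟨x, _|⟨y, t⟩⟩) a b ha hb <;> simp_all [swapCorner]
  | succ i ih =>
    rintro (_|⟨x, t⟩) a b ha hb
    · simp at ha
    · simp only [List.getElem?_cons_succ] at ha hb
      have := ih t a b ha hb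
      simp [swapCorner, List.getD_cons_succ, List.set_cons_succ] at this ⊢
      simpa [swapCorner] using this

lemma word_split (w : List Bool) (i : ℕ) (a b : Bool) (ha : w[i]? = some a)
    (hb : w[i+1]? = some b) : w = w.take i ++ a :: b :: w.drop (i+2) := by
  have h1 : i < w.length := (List.getElem?_eq_some_iff.mp ha).1
  have h2 : i + 1 < w.length := (List.getElem?_eq_some_iff.mp hb).1
  have e1 : w[i] = a := by simpa [List.getElem?_eq_getElem h1] using ha
  have e2 : w[i+1] = b := by simpa [List.getElem?_eq_getElem h2] using hb
  conv_lhs => rw [← List.take_append_drop i w, List.drop_eq_getElem_cons h1,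
    List.drop_eq_getElem_cons h2, e1, e2]

lemma take_len (w : List Bool) (i : ℕ) (h : i < w.length) : (w.take i).length = i := by
  simp [List.length_take]; omega

lemma swap_spec (w : List Bool) (i : ℕ) (a b : Bool) (ha : w[i]? = some a)
    (hb : w[i+1]? = some b) :
    (swapCorner w i).length = w.length ∧
    (∀ c, (swapCorner w i).count c = w.count c) ∧
    (∀ k, k ≤ i → (swapCorner w i).take k = w.take k) ∧
    ((swapCorner w i).take (i+1) = w.take i ++ [b]) ∧
    (w.take (i+1) = w.take i ++ [a]) ∧
    (∀ c k, i+2 ≤ k → ((swapCorner w i).take k).count c = (w.take k).count c) ∧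
    (∀ j, j < i → (swapCorner w i)[j]? = w[j]?) ∧
    (swapCorner w i)[i]? = some b ∧ (swapCorner w i)[i+1]? = some a ∧
    swapCorner (swapCorner w i) i = w := by
  have h1 : i < w.length := (List.getElem?_eq_some_iff.mp ha).1
  set u := w.take i with hu
  set t := w.drop (i+2) with ht
  have hul : u.length = i := take_len w i h1
  have hwe : w = u ++ a :: b :: t := word_split w i a b ha hb
  have hse : swapCorner w i = u ++ b :: a :: t := swapCorner_eq i w a b ha hb
  have key : ∀ (x y : Bool) (k : ℕ), i + 2 ≤ k →
      (u ++ x :: y :: t).take k = u ++ x :: y :: t.take (k - i - 2) := by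
    intro x y k hk
    obtain ⟨m, rfl⟩ : ∃ m, k = i + 2 + m := ⟨k - (i+2), by omega⟩
    have h' : i + 2 + m = u.length + (m + 2) := by omega
    rw [h', List.take_append, List.take_of_length_le (by omega), Nat.add_sub_cancel_left]
    have h'' : u.length + (m + 2) - i - 2 = m := by omega
    simp only [List.take_succ_cons, h'']
  have tk : ∀ (x y : Bool) (k : ℕ), k ≤ i → (u ++ x :: y :: t).take k = w.take k := by
    intro x y k hk
    rw [List.take_append_of_le_length (by omega), hu, List.take_take, min_eq_left hk]
  have tk1 : ∀ (x y : Bool), (u ++ x :: y :: t).take (i+1) = u ++ [x] := by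
    intro x y
    have : i + 1 = u.length + 1 := by omega
    rw [this, List.take_append, List.take_of_length_le (by omega), Nat.add_sub_cancel_left]
    rfl
  refine ⟨?_, ?_, ?_, ?_, ?_, ?_, ?_, ?_, ?_, ?_⟩
  · rw [hse, hwe]; simp
  · intro c; rw [hse]; conv_rhs => rw [hwe]
    simp [List.count_cons]; ring
  · intro k hk; rw [hse, tk b a k hk]
  · rw [hse, tk1]
  · conv_lhs => rw [hwe]; rw [tk1]
  · intro c k hk
    rw [hse, key b a k hk]; conv_rhs => rw [hwe, key a b k hk]
    simp [List.count_cons]; ring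
  · intro j hj
    rw [hse]; conv_rhs => rw [hwe]
    rw [List.getElem?_append_left (by omega), List.getElem?_append_left (by omega)]
  · rw [hse]
    have : i = u.length + 0 := by omega
    rw [this, List.getElem?_append_right (by omega)]
    simp
  · rw [hse]
    have : i + 1 = u.length + 1 := by omega
    rw [this, List.getElem?_append_right (by omega)]
    simp
  · have h2 : (swapCorner w i)[i]? = some b := by
      rw [hse]
      have : i = u.length + 0 := by omega
      rw [this, List.getElem?_append_right (by omega)]; simp
    have h3 : (swapCorner w i)[i+1]? = some a := by
      rw [hse]
      have : i + 1 = u.length + 1 := by omega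
      rw [this, List.getElem?_append_right (by omega)]; simp
    rw [swapCorner_eq i _ b a h2 h3, hse]
    rw [List.take_append_of_le_length (le_of_eq hul.symm)]
    have e1 : List.take i u = u := by rw [hu, List.take_take, min_self]
    have e2 : (i : ℕ) + 2 = u.length + 2 := by omega
    rw [e1, e2, List.drop_append, List.drop_eq_nil_of_le (by omega), List.nil_append,
      Nat.add_sub_cancel_left]
    exact hwe.symm

lemma main_step (n : ℕ) (w : List Bool) (hw : IsDyckPath n w) (i : ℕ)
    (hbad : IsBadCorner w i) (hfirst : ∀ j, j < i → ¬ IsBadCorner w j) :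
    IsDyckPath n (swapCorner w i) ∧ IsBadCorner (swapCorner w i) i ∧
    (∀ j, j < i → ¬ IsBadCorner (swapCorner w i) j) ∧
    swapCorner (swapCorner w i) i = w ∧ swapCorner w i ≠ w := by
  rcases hbad with ⟨hp, hy⟩ | ⟨hv, hx⟩
  · -- bad peak
    obtain ⟨hlen, hcount, htk, htk1, hwtk1, hck, hgj, hgi, hgi1, hinv⟩ :=
      swap_spec w i true false hp.1 hp.2
    have hxe : Even (xcoord w (i+1)) := first_bad_peak_even_x w i hfirst hp
    have hxi : xcoord w (i+1) = xcoord w i := by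
      unfold xcoord; rw [count_take_succ w false true i hp.1]; simp
    have hyi : ycoord w (i+1) = ycoord w i + 1 := by
      unfold ycoord; rw [count_take_succ w true true i hp.1]; simp
    have hxi2 : xcoord w (i+2) = xcoord w i + 1 := by
      unfold xcoord at hxi ⊢; rw [count_take_succ w false false (i+1) hp.2]; simp [hxi]
    have hyi2 : ycoord w (i+2) = ycoord w i + 1 := by
      unfold ycoord at hyi ⊢; rw [count_take_succ w true false (i+1) hp.2]; simp
      exact hyi
    have hkey : xcoord w i + 1 ≤ ycoord w i := by
      have hd : xcoord w (i+2) ≤ ycoord w (i+2) := hw.2.2 (i+2)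
      rw [hxi2, hyi2] at hd
      rw [hxi, Nat.even_iff] at hxe
      rw [hyi, Nat.even_iff] at hy
      omega
    refine ⟨⟨hlen.trans hw.1, (hcount true).trans hw.2.1, ?_⟩, ?_, ?_, hinv, ?_⟩
    · intro k
      rcases lt_trichotomy k (i+1) with hk | hk | hk
      · rw [htk k (by omega)]; exact hw.2.2 k
      · subst hk
        rw [htk1]
        simp [List.count_append]
        simpa [xcoord, ycoord] using hkey
      · rw [hck false k (by omega), hck true k (by omega)]; exact hw.2.2 k
    · refine Or.inr ⟨⟨hgi, hgi1⟩, ?_⟩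
      have e : xcoord (swapCorner w i) (i+1) = xcoord w i + 1 := by
        unfold xcoord; rw [htk1]; simp
      rw [e, Nat.odd_iff]
      rw [hxi, Nat.even_iff] at hxe
      omega
    · intro j hj hbadj
      rcases lt_or_eq_of_le (show j + 1 ≤ i by omega) with hj1 | hj1
      · apply hfirst j hj
        unfold IsBadCorner IsPeak IsValley ycoord xcoord at hbadj ⊢
        rw [hgj j (by omega), hgj (j+1) (by omega), htk (j+1) (by omega)] at hbadj
        exact hbadj
      · rcases hbadj with ⟨⟨p1, p2⟩, pe⟩ | ⟨⟨v1, v2⟩, vo⟩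
        · -- peak at j = i-1 in w' ; its y-coord is ycoord w i = odd
          have e : ycoord (swapCorner w i) (j+1) = ycoord w i := by
            unfold ycoord; rw [htk (j+1) (by omega), hj1]
          rw [e, Nat.even_iff] at pe
          rw [hyi, Nat.even_iff] at hy
          omega
        · rw [hj1] at v2
          rw [hgi] at v2
          simp at v2
    · intro he
      rw [he, hp.1] at hgi
      simp at hgi
  · -- bad valley
    obtain ⟨hlen, hcount, htk, htk1, hwtk1, hck, hgj, hgi, hgi1, hinv⟩ :=
      swap_spec w i false true hv.1 hv.2
    have hyo : Odd (ycoord w (i+1)) := first_bad_valley_odd_y n w hw i hfirst hv hx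
    have hyi : ycoord w (i+1) = ycoord w i := by
      unfold ycoord; rw [count_take_succ w true false i hv.1]; simp
    have hxi : xcoord w (i+1) = xcoord w i + 1 := by
      unfold xcoord; rw [count_take_succ w false false i hv.1]; simp
    refine ⟨⟨hlen.trans hw.1, (hcount true).trans hw.2.1, ?_⟩, ?_, ?_, hinv, ?_⟩
    · intro k
      rcases lt_trichotomy k (i+1) with hk | hk | hk
      · rw [htk k (by omega)]; exact hw.2.2 k
      · subst hk
        rw [htk1]
        simp [List.count_append]
        have hd := hw.2.2 i
        exact le_trans hd (by omega)
      · rw [hck false k (by omega), hck true k (by omega)]; exact hw.2.2 k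
    · refine Or.inl ⟨⟨hgi, hgi1⟩, ?_⟩
      have e : ycoord (swapCorner w i) (i+1) = ycoord w i + 1 := by
        unfold ycoord; rw [htk1]; simp
      rw [e, Nat.even_iff]
      rw [hyi, Nat.odd_iff] at hyo
      omega
    · intro j hj hbadj
      rcases lt_or_eq_of_le (show j + 1 ≤ i by omega) with hj1 | hj1
      · apply hfirst j hj
        unfold IsBadCorner IsPeak IsValley ycoord xcoord at hbadj ⊢
        rw [hgj j (by omega), hgj (j+1) (by omega), htk (j+1) (by omega)] at hbadj
        exact hbadj
      · rcases hbadj with ⟨⟨p1, p2⟩, pe⟩ | ⟨⟨v1, v2⟩, vo⟩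
        · rw [hj1] at p2
          rw [hgi] at p2
          simp at p2
        · have e : xcoord (swapCorner w i) (j+1) = xcoord w i := by
            unfold xcoord; rw [htk (j+1) (by omega), hj1]
          rw [e, Nat.odd_iff] at vo
          rw [hxi, Nat.odd_iff] at hx
          omega
    · intro he
      rw [he, hv.1] at hgi
      simp at hgi

/-- `φ` (swapping the first bad corner, if any) is an involution on Dyck paths of size `n`
whose fixed points are exactly the Dyck paths with no bad corner. -/
theorem phiMap_involution (n : ℕ) (w : List Bool) (hw : IsDyckPath n w) :
    IsDyckPath n (phiMap w) ∧ phiMap (phiMap w) = w ∧ (phiMap w = w ↔ NoBadCorner w) := by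
  classical
  by_cases h : ∃ i, IsBadCorner w i
  · have hphi : phiMap w = swapCorner w (Nat.find h) := by
      unfold phiMap; rw [dif_pos h]
    obtain ⟨hd, hb2, hf2, hinv, hne⟩ :=
      main_step n w hw (Nat.find h) (Nat.find_spec h) (fun j hj => Nat.find_min h hj)
    have h' : ∃ i, IsBadCorner (swapCorner w (Nat.find h)) i := ⟨Nat.find h, hb2⟩
    have hfind' : Nat.find h' = Nat.find h := by
      have h1 : Nat.find h' ≤ Nat.find h := Nat.find_le hb2
      have h2 : ¬ Nat.find h' < Nat.find h := fun hlt => hf2 _ hlt (Nat.find_spec h')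
      omega
    have hphi2 : phiMap (swapCorner w (Nat.find h)) =
        swapCorner (swapCorner w (Nat.find h)) (Nat.find h) := by
      unfold phiMap; rw [dif_pos h', hfind']
    refine ⟨by rw [hphi]; exact hd, by rw [hphi, hphi2, hinv], ?_⟩
    constructor
    · intro hfix
      exact absurd (hphi.symm.trans hfix) hne
    · intro hnb
      exfalso
      rcases Nat.find_spec h with ⟨hp, hy⟩ | ⟨hv, hx⟩
      · have ho := hnb.1 _ hp
        rw [Nat.odd_iff] at ho; rw [Nat.even_iff] at hy; omega
      · have he := hnb.2 _ hv
        rw [Nat.even_iff] at he; rw [Nat.odd_iff] at hx; omega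
  · have hphi : phiMap w = w := by unfold phiMap; rw [dif_neg h]
    push_neg at h
    refine ⟨by rw [hphi]; exact hw, by rw [hphi, hphi], ?_⟩
    rw [hphi]
    constructor
    · intro _
      constructor
      · intro i hp
        have hi := h i; rw [IsBadCorner] at hi; push_neg at hi
        exact Nat.not_even_iff_odd.mp (hi.1 hp)
      · intro i hv
        have hi := h i; rw [IsBadCorner] at hi; push_neg at hi
        exact Nat.not_odd_iff_even.mp (hi.2 hv)
    · intro _; rfl
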